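/- No finite sample complexity without regularity: for every number of samples s, every ε ∈ (0,1), and every pricing rule p mapping s samples to a price, there exists a distribution F (a point mass of probability 1/M at M and mass 1-1/M at 0, for suitable M) such that the expected revenue of the data-driven price is less than (1-ε) times the monopoly revenue of F. In particular, letting M → ∞, no function of s samples guarantees a constant-factor approximation of the monopoly revenue over all distributions. -/

import Mathlib

open MeasureTheory

/-- No finite sample complexity without regularity: for every number of
samples `s`, every `ε ∈ (0,1)`, and every (measurable, nonnegative) pricing
rule `p` mapping `s` samples to a price, there is a distribution — a point
mass of probability `1/M` at `M` and mass `1-1/M` at `0`, for suitable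
`M ≥ 1`, whose monopoly revenue equals `1` — on which the expected revenue of
the data-driven price is less than `(1-ε)` times the monopoly revenue. -/
theorem no_finite_sample_complexity_irregular
    (s : ℕ) (ε : ℝ) (hε : ε ∈ Set.Ioo (0 : ℝ) 1)
    (p : (Fin s → ℝ) → ℝ) (hmeas : Measurable p) (hpos : ∀ x, 0 ≤ p x) :
    ∃ M : ℝ, 1 ≤ M ∧
      (∀ μ : Measure ℝ,
        μ = ENNReal.ofReal (1 - 1 / M) • Measure.dirac 0 +
            ENNReal.ofReal (1 / M) • Measure.dirac M →
        ((⨆ q : ℝ, q * (μ {v | q ≤ v}).toReal) = 1 ∧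
         (∫ v : Fin s → ℝ, p v * (μ {x | p v ≤ x}).toReal
            ∂(Measure.pi fun _ => μ)) < (1 - ε) * 1)) := by
  obtain ⟨hε0, hε1⟩ := hε
  set c := p 0 with hc
  have hc0 : 0 ≤ c := hpos 0
  have hden : (0:ℝ) < 1 - ε := by linarith
  set M : ℝ := max 1 ((s + c + 1)/(1-ε)) with hM
  have hM1 : 1 ≤ M := le_max_left _ _
  have hM0 : 0 < M := lt_of_lt_of_le one_pos hM1
  have hMinv0 : (0:ℝ) ≤ 1/M := by positivity
  have hMinv : (0:ℝ) ≤ 1 - 1/M := by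
    have : 1/M ≤ 1 := by rw [div_le_one hM0]; exact hM1
    linarith
  refine ⟨M, hM1, ?_⟩
  intro μ hμ
  have Fval : ∀ q : ℝ, (μ {x : ℝ | q ≤ x}).toReal =
      (if q ≤ 0 then 1-1/M else 0) + (if q ≤ M then 1/M else 0) := by
    intro q
    rw [hμ]
    simp only [Measure.coe_add, Measure.coe_smul, Pi.add_apply, Pi.smul_apply,
      smul_eq_mul, Measure.dirac_apply, Set.indicator_apply, Set.mem_setOf_eq,
      Pi.one_apply]
    by_cases h1 : q ≤ 0 <;> by_cases h2 : q ≤ M <;>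
      simp only [h1, h2, if_true, if_false, mul_one, mul_zero, add_zero, zero_add]
    · rw [← ENNReal.ofReal_add hMinv hMinv0,
        ENNReal.toReal_ofReal (add_nonneg hMinv hMinv0)]
    · exact ENNReal.toReal_ofReal hMinv
    · exact ENNReal.toReal_ofReal hMinv0
    · simp
  have Fnonneg : ∀ q : ℝ, (0:ℝ) ≤ (μ {x : ℝ | q ≤ x}).toReal :=
    fun q => ENNReal.toReal_nonneg
  have key : ∀ q : ℝ, q * (μ {x : ℝ | q ≤ x}).toReal ≤ 1 := by
    intro q
    rcases le_or_gt q 0 with h1 | h1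
    · have := mul_nonpos_of_nonpos_of_nonneg h1 (Fnonneg q)
      linarith
    · rw [Fval, if_neg (not_le.mpr h1)]
      by_cases h2 : q ≤ M
      · rw [if_pos h2]
        rw [zero_add]
        calc q * (1/M) ≤ M * (1/M) := by
              apply mul_le_mul_of_nonneg_right h2 hMinv0
          _ = 1 := by field_simp
      · rw [if_neg h2]; norm_num
  have hsup : (⨆ q : ℝ, q * (μ {v | q ≤ v}).toReal) = 1 := by
    have hbdd : BddAbove (Set.range fun q : ℝ => q * (μ {v | q ≤ v}).toReal) := by
      refine ⟨1, ?_⟩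
      rintro x ⟨q, rfl⟩
      exact key q
    apply le_antisymm
    · exact ciSup_le key
    · have hMval : M * (μ {v : ℝ | M ≤ v}).toReal = 1 := by
        rw [Fval, if_neg (by linarith), if_pos le_rfl, zero_add]
        field_simp
      calc (1:ℝ) = M * (μ {v : ℝ | M ≤ v}).toReal := hMval.symm
        _ ≤ _ := le_ciSup hbdd M
  haveI hprob : IsProbabilityMeasure μ := by
    constructor
    rw [hμ]
    simp only [Measure.coe_add, Measure.coe_smul, Pi.add_apply, Pi.smul_apply,
      smul_eq_mul, Measure.dirac_apply, Set.indicator_univ, Pi.one_apply, mul_one]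
    rw [← ENNReal.ofReal_add hMinv hMinv0]
    norm_num
  have ha : (Measure.pi fun _ : Fin s => μ) {(0 : Fin s → ℝ)} =
      ENNReal.ofReal (1-1/M) ^ s := by
    have h0 : ({(0 : Fin s → ℝ)} : Set (Fin s → ℝ)) =
        Set.pi Set.univ (fun _ => ({0} : Set ℝ)) := by
      ext x; simp [funext_iff]
    rw [h0, Measure.pi_pi]
    have hμ0 : μ ({0} : Set ℝ) = ENNReal.ofReal (1-1/M) := by
      rw [hμ]
      simp [Measure.dirac_apply, Set.indicator_apply, hM0.ne']
    simp [hμ0]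
  have hsm : MeasurableSet ({(0 : Fin s → ℝ)} : Set (Fin s → ℝ)) :=
    measurableSet_singleton 0
  have hind : Integrable (Set.indicator {(0 : Fin s → ℝ)} (fun _ => c/M - 1))
      (Measure.pi fun _ => μ) := (integrable_const _).indicator hsm
  set h : (Fin s → ℝ) → ℝ :=
    fun v => 1 + Set.indicator {(0 : Fin s → ℝ)} (fun _ => c/M - 1) v with hh
  have hint : Integrable h (Measure.pi fun _ => μ) := (integrable_const 1).add hind
  have hInth : ∫ v, h v ∂(Measure.pi fun _ => μ) = 1 + (1-1/M)^s * (c/M - 1) := by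
    rw [hh]
    rw [integral_add (integrable_const 1) hind, integral_const,
      integral_indicator_const _ hsm, measureReal_def, measureReal_def, ha, ENNReal.toReal_pow,
      ENNReal.toReal_ofReal hMinv, measure_univ]
    simp [smul_eq_mul, mul_comm]
  have hgh : ∀ v, p v * (μ {x | p v ≤ x}).toReal ≤ h v := by
    intro v
    by_cases hv : v = 0
    · subst hv
      rw [hh]
      simp only [Set.indicator_of_mem (Set.mem_singleton _)]
      have : (1:ℝ) + (c/M - 1) = c/M := by ring
      rw [this, ← hc]
      rw [Fval]
      rcases eq_or_lt_of_le hc0 with h0 | h0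
      · rw [← h0]; simp [hMinv0]
      · rw [if_neg (not_le.mpr h0), zero_add]
        by_cases h2 : c ≤ M
        · rw [if_pos h2]
          rw [mul_one_div]
        · rw [if_neg h2, mul_zero]
          positivity
    · simp only [hh, Set.indicator_of_notMem (show v ∉ ({0} : Set (Fin s → ℝ)) by
        simpa using hv), add_zero]
      exact key (p v)
  have hle : (∫ v : Fin s → ℝ, p v * (μ {x | p v ≤ x}).toReal
      ∂(Measure.pi fun _ => μ)) ≤ 1 + (1-1/M)^s * (c/M - 1) := by
    rw [← hInth]
    exact integral_mono_of_nonneg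
      (Filter.Eventually.of_forall fun v => mul_nonneg (hpos v) ENNReal.toReal_nonneg)
      hint (Filter.Eventually.of_forall hgh)
  refine ⟨hsup, lt_of_le_of_lt hle ?_⟩
  -- arithmetic
  set a : ℝ := (1-1/M)^s with hadef
  have ha0 : (0:ℝ) ≤ a := pow_nonneg hMinv s
  have ha1 : a ≤ 1 := pow_le_one₀ hMinv (by linarith)
  have hb : 1 - (s:ℝ)/M ≤ a := by
    have h2 : (-2:ℝ) ≤ -(1/M) := by
      have : 1/M ≤ 1 := by rw [div_le_one hM0]; exact hM1
      linarith
    have := one_add_mul_le_pow h2 s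
    have heq : (1:ℝ) + -(1/M) = 1 - 1/M := by ring
    rw [heq] at this
    calc 1 - (s:ℝ)/M = 1 + (s:ℝ) * -(1/M) := by ring
      _ ≤ (1 - 1/M)^s := this
      _ = a := rfl
  have hac : a * (c/M) ≤ c/M :=
    mul_le_of_le_one_left (div_nonneg hc0 hM0.le) ha1
  have hfrac : ((s:ℝ) + c)/M < 1 - ε := by
    rw [div_lt_iff₀ hM0]
    have hM2 : ((s:ℝ) + c + 1)/(1-ε) ≤ M := le_max_right _ _
    have : (s:ℝ) + c + 1 ≤ (1-ε) * M := by
      rw [div_le_iff₀ hden] at hM2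
      linarith [hM2]
    linarith
  have : 1 + a * (c/M - 1) = (1 - a) + a * (c/M) := by ring
  rw [this]
  have h1a : 1 - a ≤ (s:ℝ)/M := by linarith
  calc (1 - a) + a * (c/M) ≤ (s:ℝ)/M + c/M := add_le_add h1a hac
    _ = ((s:ℝ) + c)/M := by ring
    _ < 1 - ε := hfrac
    _ = (1-ε) * 1 := by ring
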